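/- The localization dynamics of stochastic localization equals the restricted Gaussian dynamics: let π be a strictly positive probability density on ℝ^d, let T > 0, and set η := 1/T. Define the joint density ρ(w,c) := π(w)·(2πT)^{−d/2} exp(−‖c − Tw‖₂²/(2T)), with c-marginal μ(c) := ∫ ρ(w,c) dw, posterior π(x|c) := ρ(x,c)/μ(c), and conditional μ(c|x) := ρ(x,c)/π(x). Then for all x, x' ∈ ℝ^d, ∫ [π(x|c) π(x'|c) / π(x)] μ(c) dc = ∫ μ(c|x) π(x'|c) dc, and this common value equals the transition density of the restricted Gaussian dynamics with step size η and target π evaluated at (x, x'), namely ∫ (2πη)^{−d/2} exp(−‖y−x‖₂²/(2η)) · [exp(−‖x'−y‖₂²/(2η)) π(x') / Z(y)] dy with Z(y) := ∫ exp(−‖z−y‖₂²/(2η)) π(z) dz. -/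

import Mathlib

open MeasureTheory Real

/-- **The localization dynamics of stochastic localization equals the restricted Gaussian
dynamics.**  Let `p` be a strictly positive probability density on `ℝ^d`, `T > 0`,
`η = 1/T`.  With the joint density `ρ(w,c) = p(w)·(2πT)^{-d/2} exp(-‖c - Tw‖²/(2T))`,
`c`-marginal `μc`, posterior `post x c = ρ(x,c)/μc(c)`, and conditional
`cond c x = ρ(x,c)/p(x)`, we have for all `x, x'`:
`∫ post(x|c) post(x'|c) / p(x) · μc(c) dc = ∫ cond(c|x) post(x'|c) dc`, and this common
value equals the transition density of the restricted Gaussian dynamics with step size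
`η` and target `p` at `(x,x')`. -/
theorem localization_dynamics_eq_RGD (d : ℕ)
    (p : EuclideanSpace ℝ (Fin d) → ℝ)
    (hp_pos : ∀ x, 0 < p x) (hp_meas : Measurable p) (hp_prob : ∫ x, p x = 1)
    (T : ℝ) (hT : 0 < T) (η : ℝ) (hη : η = 1 / T)
    (ρ : EuclideanSpace ℝ (Fin d) → EuclideanSpace ℝ (Fin d) → ℝ)
    (hρ : ∀ w c, ρ w c = p w * (2 * Real.pi * T) ^ (-(d : ℝ) / 2) *
      Real.exp (-‖c - T • w‖ ^ 2 / (2 * T)))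
    (μc : EuclideanSpace ℝ (Fin d) → ℝ) (hμc : ∀ c, μc c = ∫ w, ρ w c)
    (hμc_pos : ∀ c, 0 < μc c)
    (post : EuclideanSpace ℝ (Fin d) → EuclideanSpace ℝ (Fin d) → ℝ)
    (hpost : ∀ x c, post x c = ρ x c / μc c)
    (cond : EuclideanSpace ℝ (Fin d) → EuclideanSpace ℝ (Fin d) → ℝ)
    (hcond : ∀ c x, cond c x = ρ x c / p x)
    (Z : EuclideanSpace ℝ (Fin d) → ℝ)
    (hZ : ∀ y, Z y = ∫ z, Real.exp (-‖z - y‖ ^ 2 / (2 * η)) * p z)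
    (hZ_pos : ∀ y, 0 < Z y)
    -- all the displayed integrals are assumed finite:
    (hint : ∀ x x' : EuclideanSpace ℝ (Fin d),
      Integrable (fun c => post x c * post x' c / p x * μc c) ∧
      Integrable (fun c => cond c x * post x' c) ∧
      Integrable (fun y => (2 * Real.pi * η) ^ (-(d : ℝ) / 2) *
        Real.exp (-‖y - x‖ ^ 2 / (2 * η)) *
        (Real.exp (-‖x' - y‖ ^ 2 / (2 * η)) * p x' / Z y))) :
    ∀ x x' : EuclideanSpace ℝ (Fin d),
      (∫ c, post x c * post x' c / p x * μc c) = (∫ c, cond c x * post x' c) ∧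
      (∫ c, cond c x * post x' c) =
        ∫ y, (2 * Real.pi * η) ^ (-(d : ℝ) / 2) *
          Real.exp (-‖y - x‖ ^ 2 / (2 * η)) *
          (Real.exp (-‖x' - y‖ ^ 2 / (2 * η)) * p x' / Z y) := by
  intro x x'
  have hηpos : 0 < η := by rw [hη]; positivity
  have hηT : η * T = 1 := by rw [hη]; field_simp
  -- the basic norm identity
  have hnorm : ∀ (a c : EuclideanSpace ℝ (Fin d)),
      -‖c - T • a‖ ^ 2 / (2 * T) = -‖T⁻¹ • c - a‖ ^ 2 / (2 * η) := by
    intro a c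
    have h1 : c - T • a = T • (T⁻¹ • c - a) := by
      rw [smul_sub, smul_smul, mul_inv_cancel₀ hT.ne', one_smul]
    rw [h1, norm_smul, Real.norm_eq_abs, abs_of_pos hT, mul_pow]
    rw [hη]
    field_simp
  -- μc in terms of Z
  have hμZ : ∀ c, μc c = (2 * Real.pi * T) ^ (-(d : ℝ) / 2) * Z (T⁻¹ • c) := by
    intro c
    rw [hμc, hZ]
    rw [← integral_const_mul]
    congr 1 with w
    rw [hρ, norm_sub_rev w (T⁻¹ • c), ← hnorm w c]
    ring
  -- the pointwise identity for the first equality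
  constructor
  · refine integral_congr_ae (Filter.Eventually.of_forall fun c => ?_)
    simp only [hpost, hcond]
    have h1 := (hμc_pos c).ne'
    have h2 := (hp_pos x).ne'
    field_simp
  · -- second equality: change of variables c = T • y
    set g : EuclideanSpace ℝ (Fin d) → ℝ := fun y =>
        (2 * Real.pi * T) ^ (-(d : ℝ) / 2) *
          Real.exp (-‖y - x‖ ^ 2 / (2 * η)) *
          (Real.exp (-‖x' - y‖ ^ 2 / (2 * η)) * p x' / Z y) with hg
    have key : ∀ c, cond c x * post x' c = g (T⁻¹ • c) := by
      intro c
      simp only [hg]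
      rw [hcond, hpost, hρ, hρ, hμZ]
      set K := (2 * Real.pi * T) ^ (-(d : ℝ) / 2) with hK
      have e1 : Real.exp (-‖c - T • x‖ ^ 2 / (2 * T)) =
          Real.exp (-‖T⁻¹ • c - x‖ ^ 2 / (2 * η)) := by
        rw [hnorm x c]
      have e2 : Real.exp (-‖c - T • x'‖ ^ 2 / (2 * T)) =
          Real.exp (-‖x' - T⁻¹ • c‖ ^ 2 / (2 * η)) := by
        rw [hnorm x' c, norm_sub_rev]
      rw [e1, e2]
      have h2 := (hp_pos x).ne'
      have h3 := (hZ_pos (T⁻¹ • c)).ne'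
      have h4 : (2 * Real.pi * T) ^ (-(d : ℝ) / 2) ≠ 0 := by
        apply ne_of_gt
        apply Real.rpow_pos_of_pos
        positivity
      rw [← hK] at h4
      rw [div_mul_div_comm, ← mul_div_assoc,
        div_eq_div_iff (by exact mul_ne_zero h2 (mul_ne_zero h4 h3)) h3]
      ring
    rw [integral_congr_ae (Filter.Eventually.of_forall key)]
    have hcv := Measure.integral_comp_inv_smul_of_nonneg
      (volume : Measure (EuclideanSpace ℝ (Fin d))) g hT.le
    rw [hcv, finrank_euclideanSpace_fin, smul_eq_mul, ← integral_const_mul]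
    congr 1 with y
    simp only [hg]
    have hpow : (T : ℝ) ^ d * (2 * Real.pi * T) ^ (-(d : ℝ) / 2) =
        (2 * Real.pi * η) ^ (-(d : ℝ) / 2) := by
      have h2πη : (2 : ℝ) * Real.pi * η > 0 := by positivity
      have hTη : 2 * Real.pi * T = (2 * Real.pi * η) * (T ^ 2) := by
        have : η = T⁻¹ := by rw [hη, one_div]
        rw [this]; field_simp
      rw [hTη, Real.mul_rpow h2πη.le (by positivity)]
      have hT2 : ((T : ℝ) ^ 2) ^ (-(d : ℝ) / 2) = T ^ (-(d : ℝ)) := by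
        rw [← Real.rpow_natCast T 2, ← Real.rpow_mul hT.le]
        congr 1
        push_cast
        ring
      rw [hT2, Real.rpow_neg hT.le, Real.rpow_natCast]
      field_simp
    rw [← mul_assoc, ← mul_assoc, hpow]
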